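/- There exists a constant c ∈ ℕ with the following property. Let n, r ∈ ℕ, let α = e^{iπ/4}, let l(v) be an affine form, q(v) = ∑_{1≤i<j≤n} q_{ij} v_i v_j a quadratic form, and c(v) = ∑_{1≤i<j<k≤n} c_{ijk} v_i v_j v_k a cubic form, all with integer coefficients, and let L_1, …, L_r be affine forms in v with integer coefficients. Then the function Ψ : {0,1}^n → ℂ defined by Ψ(v) = α^{l(v)} · i^{q(v)} · (−1)^{c(v)} · ∏_{j=1}^r [L_j(v) ≡ 0 (mod 2)] (where [P] is 1 if P holds and 0 otherwise) is exactly representable by an RBM with at most c·(n³ + r + 1) hidden neurons. -/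

import Mathlib

open Complex

/-- A function `f : {0,1}^n → ℂ` is exactly representable by a restricted Boltzmann machine
with `m` hidden neurons if there are complex parameters `a i`, `b j`, `W i j` and a nonzero
constant `C` with
`f v = C · exp(∑ i, a i v i) · ∏ j, (1 + exp(b j + ∑ i, W i j v i))` for all `v ∈ {0,1}^n`. -/
def RBMRepresentable (n m : ℕ) (f : (Fin n → Bool) → ℂ) : Prop :=
  ∃ (C : ℂ) (a : Fin n → ℂ) (b : Fin m → ℂ) (W : Fin n → Fin m → ℂ),
    C ≠ 0 ∧ ∀ v : Fin n → Bool,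
      f v = C * Complex.exp (∑ i, a i * (if v i then 1 else 0)) *
        ∏ j, (1 + Complex.exp (b j + ∑ i, W i j * (if v i then 1 else 0)))

lemma zpow_sum' {ι : Type*} (a : ℂ) (ha : a ≠ 0) (s : Finset ι) (f : ι → ℤ) :
    a ^ (∑ t ∈ s, f t) = ∏ t ∈ s, a ^ f t := by
  classical
  induction s using Finset.induction with
  | empty => simp
  | @insert _ _ h ih => rw [Finset.sum_insert h, Finset.prod_insert h, zpow_add₀ ha, ih]

lemma rep_congr {n m : ℕ} {f g : (Fin n → Bool) → ℂ} (h : RBMRepresentable n m f)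
    (hfg : ∀ v, f v = g v) : RBMRepresentable n m g := by
  obtain ⟨C, a, b, W, hC, hf⟩ := h
  exact ⟨C, a, b, W, hC, fun v => (hfg v) ▸ hf v⟩

lemma rep_const (n m : ℕ) (K : ℂ) (hK : K ≠ 0) :
    RBMRepresentable n m (fun _ => K) := by
  refine ⟨K / 2 ^ m, 0, 0, 0, div_ne_zero hK (pow_ne_zero _ two_ne_zero), fun v => ?_⟩
  simp only [Pi.zero_apply, zero_mul, Finset.sum_const, smul_zero, Complex.exp_zero,
    mul_one, zero_add, add_zero, Finset.prod_const, Finset.card_univ, Fintype.card_fin]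
  rw [eq_comm, show ((1:ℂ)+1) = 2 by norm_num]
  field_simp

lemma rep_linear {n : ℕ} (c0 : ℂ) (cl : Fin n → ℂ) :
    RBMRepresentable n 0 (fun v => Complex.exp (c0 + ∑ i, cl i * (if v i then 1 else 0))) := by
  refine ⟨Complex.exp c0, cl, 0, 0, Complex.exp_ne_zero _, fun v => ?_⟩
  simp [Complex.exp_add]

lemma rep_mul {n m₁ m₂ : ℕ} {f g : (Fin n → Bool) → ℂ}
    (hf : RBMRepresentable n m₁ f) (hg : RBMRepresentable n m₂ g) :
    RBMRepresentable n (m₁ + m₂) (fun v => f v * g v) := by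
  obtain ⟨C₁, a₁, b₁, W₁, hC₁, h₁⟩ := hf
  obtain ⟨C₂, a₂, b₂, W₂, hC₂, h₂⟩ := hg
  refine ⟨C₁ * C₂, fun i => a₁ i + a₂ i, Fin.append b₁ b₂,
    fun i => Fin.append (W₁ i) (W₂ i), mul_ne_zero hC₁ hC₂, fun v => ?_⟩
  dsimp only
  rw [h₁ v, h₂ v]
  have hsum : ∑ i, (a₁ i + a₂ i) * (if v i then (1:ℂ) else 0)
      = (∑ i, a₁ i * (if v i then (1:ℂ) else 0)) + ∑ i, a₂ i * (if v i then (1:ℂ) else 0) := by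
    rw [← Finset.sum_add_distrib]; exact Finset.sum_congr rfl fun i _ => by ring
  rw [hsum, Complex.exp_add, Fin.prod_univ_add]
  simp only [Fin.append_left, Fin.append_right]
  ring

lemma rep_prod {n : ℕ} {ι : Type*} [DecidableEq ι] (s : Finset ι) (m : ι → ℕ)
    (f : ι → (Fin n → Bool) → ℂ) (h : ∀ t ∈ s, RBMRepresentable n (m t) (f t)) :
    RBMRepresentable n (∑ t ∈ s, m t) (fun v => ∏ t ∈ s, f t v) := by
  induction s using Finset.induction with
  | empty => exact rep_congr (rep_const n 0 1 one_ne_zero) (by simp)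
  | @insert a s ha ih =>
    rw [Finset.sum_insert ha]
    refine rep_congr (rep_mul (h a (Finset.mem_insert_self a s))
      (ih fun t ht => h t (Finset.mem_insert_of_mem ht))) fun v => ?_
    rw [Finset.prod_insert ha]

lemma sum_two {n : ℕ} {i j : Fin n} (hij : i ≠ j) (w : ℂ) (x : Fin n → ℂ) :
    ∑ t, (if t = i then w else if t = j then w else 0) * x t = w * x i + w * x j := by
  have key : ∀ t, (if t = i then w else if t = j then w else 0) * x t
      = (if t = i then w * x t else 0) + (if t = j then w * x t else 0) := by
    intro t
    by_cases h1 : t = i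
    · subst h1; simp [hij]
    · by_cases h2 : t = j
      · subst h2; simp [h1]
      · simp [h1, h2]
  rw [Finset.sum_congr rfl fun t _ => key t, Finset.sum_add_distrib]
  simp

lemma sum_three {n : ℕ} {i j k : Fin n} (hij : i ≠ j) (hjk : j ≠ k) (hik : i ≠ k)
    (w : ℂ) (x : Fin n → ℂ) :
    ∑ t, (if t = i then w else if t = j then w else if t = k then w else 0) * x t
      = w * x i + w * x j + w * x k := by
  have key : ∀ t, (if t = i then w else if t = j then w else if t = k then w else 0) * x t
      = (if t = i then w * x t else 0) + ((if t = j then w * x t else 0)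
        + (if t = k then w * x t else 0)) := by
    intro t
    by_cases h1 : t = i
    · subst h1; simp [hij, hik]
    · by_cases h2 : t = j
      · subst h2; simp [h1, hjk]
      · by_cases h3 : t = k
        · subst h3; simp [h1, h2]
        · simp [h1, h2, h3]
  rw [Finset.sum_congr rfl fun t _ => key t, Finset.sum_add_distrib]
  simp [Finset.sum_add_distrib, add_assoc]

lemma exists_u (z : ℂ) (hz2 : z ≠ 2) :
    ∃ u : ℂ, u ≠ 0 ∧ 1 + u ≠ 0 ∧ 2 * (1 + u ^ 2) = z * (1 + u) ^ 2 := by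
  obtain ⟨w, hw⟩ := IsAlgClosed.exists_pow_nat_eq (4 * (z - 1)) (n := 2) two_pos
  have h2z : (2 : ℂ) - z ≠ 0 := sub_ne_zero.mpr (Ne.symm hz2)
  refine ⟨(z + w) / (2 - z), ?_, ?_, ?_⟩
  · intro h
    rcases div_eq_zero_iff.mp h with h | h
    · have hz : (z - 2) ^ 2 = 0 := by linear_combination hw - (w - z) * h
      exact hz2 (by linear_combination (pow_eq_zero_iff two_ne_zero).mp hz)
    · exact h2z h
  · intro h
    field_simp at h
    have hw2 : w = -2 := by linear_combination h
    rw [hw2] at hw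
    norm_num at hw
    exact hz2 (by linear_combination hw)
  · field_simp
    ring_nf
    linear_combination (2 - z) * hw

lemma rep_pair {n : ℕ} {i j : Fin n} (hij : i ≠ j) (z : ℂ) (hz0 : z ≠ 0) (hz2 : z ≠ 2) :
    RBMRepresentable n 1 (fun v => if v i ∧ v j then z else 1) := by
  obtain ⟨u, hu0, hu1, hquad⟩ := exists_u z hz2
  have hA : Complex.exp (Complex.log (2 / (1 + u))) = 2 / (1 + u) :=
    Complex.exp_log (div_ne_zero two_ne_zero hu1)
  have hU : Complex.exp (Complex.log u) = u := Complex.exp_log hu0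
  refine ⟨1 / 2,
    fun t => if t = i then Complex.log (2 / (1 + u)) else if t = j then Complex.log (2 / (1 + u)) else 0,
    fun _ => 0,
    fun t _ => if t = i then Complex.log u else if t = j then Complex.log u else 0,
    by norm_num, fun v => ?_⟩
  rw [Fin.prod_univ_one, sum_two hij, sum_two hij, zero_add]
  cases hvi : v i <;> cases hvj : v j <;>
    simp only [hvi, hvj, Bool.false_eq_true, if_true, if_false, true_and, false_and, and_true, and_false,
      mul_one, mul_zero, add_zero, zero_add, Complex.exp_zero, Complex.exp_add, hA, hU]
  · norm_num
  · field_simp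
  · field_simp
  · field_simp
    linear_combination -hquad

noncomputable def alphaC : ℂ := Complex.exp (Complex.I * Real.pi / 4)

lemma alphaC_ne_zero : alphaC ≠ 0 := Complex.exp_ne_zero _

lemma alphaC_sq : alphaC ^ 2 = Complex.I := by
  rw [alphaC, ← Complex.exp_nat_mul]
  have : ((2 : ℕ) : ℂ) * (Complex.I * Real.pi / 4) = (Real.pi / 2 : ℝ) * Complex.I := by
    push_cast; ring
  rw [this, Complex.exp_mul_I, ← Complex.ofReal_cos, ← Complex.ofReal_sin,
    Real.cos_pi_div_two, Real.sin_pi_div_two]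
  simp

lemma alphaC_pow_four : alphaC ^ 4 = -1 := by
  rw [show (4 : ℕ) = 2 * 2 from rfl, pow_mul, alphaC_sq, Complex.I_sq]

lemma I_ne_one' : Complex.I ≠ 1 := by
  intro h
  have := Complex.I_sq
  rw [h] at this
  norm_num at this

lemma one_add_alphaC_ne_zero : 1 + alphaC ≠ 0 := by
  intro h
  have hA : alphaC = -1 := by linear_combination h
  have := alphaC_sq
  rw [hA] at this
  norm_num at this
  exact I_ne_one' this.symm

lemma one_sub_alphaC_ne_zero : 1 - alphaC ≠ 0 := by
  intro h
  have hA : alphaC = 1 := by linear_combination -h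
  have := alphaC_sq
  rw [hA] at this
  norm_num at this
  exact I_ne_one' this.symm

lemma alphaC_inv : alphaC⁻¹ = -alphaC ^ 3 := by
  have h : alphaC * (-alphaC ^ 3) = 1 := by linear_combination -alphaC_pow_four
  exact inv_eq_of_mul_eq_one_right h

lemma exp_I_pi : Complex.exp (Complex.I * Real.pi) = -1 := by
  rw [mul_comm]; exact Complex.exp_pi_mul_I

/-- the "G" function appearing in the decomposition of the three-body sign factor -/
noncomputable def gfun (x y z : Bool) : ℂ :=
  (if x ∧ y ∧ z then (-1 : ℂ) else 1) * (if x ∧ y then -Complex.I else 1) *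
    (if y ∧ z then -Complex.I else 1) * (if x ∧ z then -Complex.I else 1)

lemma rep_G {n : ℕ} {i j k : Fin n} (hij : i ≠ j) (hjk : j ≠ k) (hik : i ≠ k) :
    RBMRepresentable n 1 (fun v => gfun (v i) (v j) (v k)) := by
  have hT : Complex.exp (Complex.log ((1 - alphaC) / (1 + alphaC)))
      = (1 - alphaC) / (1 + alphaC) :=
    Complex.exp_log (div_ne_zero one_sub_alphaC_ne_zero one_add_alphaC_ne_zero)
  refine ⟨(1 + alphaC) / 2,
    fun t => if t = i then -(Complex.I * Real.pi / 4) else if t = j then -(Complex.I * Real.pi / 4)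
      else if t = k then -(Complex.I * Real.pi / 4) else 0,
    fun _ => Complex.log ((1 - alphaC) / (1 + alphaC)),
    fun t _ => if t = i then Complex.I * Real.pi else if t = j then Complex.I * Real.pi
      else if t = k then Complex.I * Real.pi else 0,
    div_ne_zero one_add_alphaC_ne_zero two_ne_zero, fun v => ?_⟩
  rw [Fin.prod_univ_one, sum_three hij hjk hik, sum_three hij hjk hik]
  have hexp : Complex.exp (-(Complex.I * (Real.pi : ℝ) / 4)) = -alphaC ^ 3 := by
    rw [Complex.exp_neg, show Complex.exp (Complex.I * (Real.pi : ℝ) / 4) = alphaC from rfl,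
      alphaC_inv]
  cases hvi : v i <;> cases hvj : v j <;> cases hvk : v k <;>
    simp only [hvi, hvj, hvk, gfun, Bool.false_eq_true, if_true, if_false, true_and, false_and, and_true, and_false,
      and_self, mul_one, mul_zero, add_zero, zero_add, Complex.exp_zero, Complex.exp_add, hT,
      hexp, exp_I_pi, one_mul] <;>
    field_simp [one_add_alphaC_ne_zero]
  · ring
  · linear_combination 2 * (1 + alphaC) * alphaC_pow_four - 2 * alphaC * alphaC_pow_four
  · linear_combination 2 * (1 + alphaC) * alphaC_pow_four - 2 * alphaC * alphaC_pow_four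
  · linear_combination (2 * (1 + alphaC)) * alphaC_sq - (2 * (1 + alphaC) * alphaC ^ 2) * alphaC_pow_four - 2 * alphaC * alphaC_sq + 2 * alphaC ^ 3 * alphaC_pow_four
  · linear_combination 2 * (1 + alphaC) * alphaC_pow_four - 2 * alphaC * alphaC_pow_four
  · linear_combination (2 * (1 + alphaC)) * alphaC_sq - (2 * (1 + alphaC) * alphaC ^ 2) * alphaC_pow_four - 2 * alphaC * alphaC_sq + 2 * alphaC ^ 3 * alphaC_pow_four
  · linear_combination (2 * (1 + alphaC)) * alphaC_sq - (2 * (1 + alphaC) * alphaC ^ 2) * alphaC_pow_four - 2 * alphaC * alphaC_sq + 2 * alphaC ^ 3 * alphaC_pow_four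
  · linear_combination (-2 * (1 + alphaC)) * alphaC_sq + (2 * (1 + alphaC) * alphaC ^ 2 * (1 - alphaC ^ 4)) * alphaC_pow_four + (-2 * (Complex.I ^ 2 + Complex.I * alphaC ^ 2 + alphaC ^ 4) + 2 + 2 * alphaC) * alphaC_sq + (4 * alphaC ^ 6 + 2 * alphaC ^ 7 - 2 * alphaC ^ 2 - 2 * alphaC ^ 3) * alphaC_pow_four

lemma I_ne_two : Complex.I ≠ 2 := by
  intro h
  have := congrArg (‖·‖) h
  rw [Complex.norm_I, Complex.norm_two] at this
  norm_num at this

lemma rep_triple {n : ℕ} {i j k : Fin n} (hij : i ≠ j) (hjk : j ≠ k) (hik : i ≠ k) :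
    RBMRepresentable n 4 (fun v => if v i ∧ v j ∧ v k then (-1 : ℂ) else 1) := by
  have h1 := rep_G hij hjk hik
  have h2 := rep_pair hij Complex.I Complex.I_ne_zero I_ne_two
  have h3 := rep_pair hjk Complex.I Complex.I_ne_zero I_ne_two
  have h4 := rep_pair hik Complex.I Complex.I_ne_zero I_ne_two
  refine rep_congr (rep_mul (rep_mul (rep_mul h1 h2) h3) h4) fun v => ?_
  cases hvi : v i <;> cases hvj : v j <;> cases hvk : v k <;>
    simp only [hvi, hvj, hvk, gfun, if_true, if_false, true_and, false_and, and_true,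
      and_false, and_self, one_mul, mul_one] <;> norm_num

lemma rep_indicator {n : ℕ} (L0 : ℤ) (Lc : Fin n → ℤ) :
    RBMRepresentable n 1 (fun v =>
      if (L0 + ∑ i, Lc i * (if v i then 1 else 0)) % 2 = 0 then (1 : ℂ) else 0) := by
  refine ⟨1 / 2, 0, fun _ => Complex.I * Real.pi * L0,
    fun t _ => Complex.I * Real.pi * Lc t, by norm_num, fun v => ?_⟩
  rw [Fin.prod_univ_one]
  have harg : Complex.I * Real.pi * L0 + ∑ t, (Complex.I * Real.pi * Lc t) *
      (if v t then (1 : ℂ) else 0)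
      = ((L0 + ∑ t, Lc t * (if v t then 1 else 0) : ℤ) : ℂ) * (Complex.I * Real.pi) := by
    push_cast [apply_ite (Int.cast : ℤ → ℂ)]
    rw [add_mul, Finset.sum_mul]
    congr 1
    · ring
    · exact Finset.sum_congr rfl fun t _ => by ring
  rw [harg, Complex.exp_int_mul, exp_I_pi]
  have h0 : ∑ t, (0 : Fin n → ℂ) t * (if v t then (1:ℂ) else 0) = 0 := by simp
  rw [h0, Complex.exp_zero, mul_one]
  dsimp only
  rcases Int.even_or_odd (L0 + ∑ t, Lc t * (if v t then 1 else 0)) with he | ho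
  · rw [he.neg_one_zpow, if_pos (Int.even_iff.mp he)]
    norm_num
  · rw [ho.neg_one_zpow, if_neg (by rw [Int.odd_iff.mp ho]; norm_num)]
    norm_num

lemma abs_I_zpow_ne_two (m : ℤ) : Complex.I ^ m ≠ 2 := by
  intro h
  have := congrArg (‖·‖) h
  rw [norm_zpow, Complex.norm_I, one_zpow, Complex.norm_two] at this
  norm_num at this

lemma rep_pairF {n : ℕ} (q : Fin n → Fin n → ℤ) (p : Fin n × Fin n) :
    RBMRepresentable n 1 (fun v => Complex.I ^
      (if p.1 < p.2 then q p.1 p.2 * (if v p.1 then 1 else 0) * (if v p.2 then 1 else 0)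
        else 0)) := by
  by_cases hp : p.1 < p.2
  · refine rep_congr (rep_pair (ne_of_lt hp) (Complex.I ^ q p.1 p.2)
      (zpow_ne_zero _ Complex.I_ne_zero) (abs_I_zpow_ne_two _)) fun v => ?_
    cases hv1 : v p.1 <;> cases hv2 : v p.2 <;>
      simp [hv1, hv2, hp]
  · refine rep_congr (rep_const n 1 1 one_ne_zero) fun v => ?_
    simp [hp]

lemma rep_tripF {n : ℕ} (cc : Fin n → Fin n → Fin n → ℤ) (t : Fin n × Fin n × Fin n) :
    RBMRepresentable n 4 (fun v => (-1 : ℂ) ^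
      (if t.1 < t.2.1 ∧ t.2.1 < t.2.2 then
        cc t.1 t.2.1 t.2.2 * (if v t.1 then 1 else 0) * (if v t.2.1 then 1 else 0) *
          (if v t.2.2 then 1 else 0)
      else 0)) := by
  by_cases ht : t.1 < t.2.1 ∧ t.2.1 < t.2.2
  · have hij : t.1 ≠ t.2.1 := ne_of_lt ht.1
    have hjk : t.2.1 ≠ t.2.2 := ne_of_lt ht.2
    have hik : t.1 ≠ t.2.2 := ne_of_lt (lt_trans ht.1 ht.2)
    rcases Int.even_or_odd (cc t.1 t.2.1 t.2.2) with he | ho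
    · refine rep_congr (rep_const n 4 1 one_ne_zero) fun v => ?_
      cases hv1 : v t.1 <;> cases hv2 : v t.2.1 <;> cases hv3 : v t.2.2 <;>
        simp [hv1, hv2, hv3, ht, he.neg_one_zpow]
    · refine rep_congr (rep_triple hij hjk hik) fun v => ?_
      cases hv1 : v t.1 <;> cases hv2 : v t.2.1 <;> cases hv3 : v t.2.2 <;>
        simp [hv1, hv2, hv3, ht, ho.neg_one_zpow]
  · refine rep_congr (rep_const n 4 1 one_ne_zero) fun v => ?_
    simp [ht]

/-- There is a constant `c` such that, with `α = e^{iπ/4}`, for any affine form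
`l(v)`, quadratic form `q(v) = ∑_{i<j} q i j v i v j`, cubic form
`cc(v) = ∑_{i<j<k} cc i j k · v i v j v k` and affine forms `L_j(v)` with integer coefficients,
the XS-stabilizer-type amplitude
`Ψ(v) = α^{l(v)} i^{q(v)} (−1)^{cc(v)} ∏_j [L_j(v) ≡ 0 (mod 2)]` is exactly representable by
an RBM with at most `c(n³ + r + 1)` hidden neurons. -/
theorem xs_stabilizer_amplitude_representable :
    ∃ c : ℕ, ∀ (n r : ℕ) (l0 : ℤ) (lc : Fin n → ℤ) (q : Fin n → Fin n → ℤ)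
      (cc : Fin n → Fin n → Fin n → ℤ) (L0 : Fin r → ℤ) (Lc : Fin r → Fin n → ℤ),
      ∃ m ≤ c * (n ^ 3 + r + 1),
        RBMRepresentable n m (fun v =>
          Complex.exp (Complex.I * Real.pi / 4) ^ (l0 + ∑ i, lc i * (if v i then 1 else 0)) *
            Complex.I ^ (∑ i, ∑ j,
              if i < j then q i j * (if v i then 1 else 0) * (if v j then 1 else 0) else 0) *
            (-1 : ℂ) ^ (∑ i, ∑ j, ∑ k,
              if i < j ∧ j < k then
                cc i j k * (if v i then 1 else 0) * (if v j then 1 else 0) *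
                  (if v k then 1 else 0)
              else 0) *
            ∏ j : Fin r,
              (if (L0 j + ∑ i, Lc j i * (if v i then 1 else 0)) % 2 = 0 then 1 else 0)) := by
  refine ⟨5, fun n r l0 lc q cc L0 Lc => ?_⟩
  refine ⟨0 + (∑ _p : Fin n × Fin n, 1) + (∑ _t : Fin n × Fin n × Fin n, 4) + (∑ _j : Fin r, 1),
    ?_, ?_⟩
  · simp only [Finset.sum_const, Finset.card_univ, Fintype.card_prod, Fintype.card_fin,
      smul_eq_mul, mul_one, zero_add]
    have hn : n * n ≤ n ^ 3 + 1 := by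
      cases n with
      | zero => norm_num
      | succ m => nlinarith [Nat.succ_pos m]
    nlinarith [hn]
  · have hlin := rep_linear (n := n) (Complex.I * Real.pi / 4 * l0)
      (fun i => Complex.I * Real.pi / 4 * lc i)
    have hpair := rep_prod (Finset.univ : Finset (Fin n × Fin n)) (fun _ => 1)
      (fun p v => Complex.I ^
        (if p.1 < p.2 then q p.1 p.2 * (if v p.1 then 1 else 0) * (if v p.2 then 1 else 0)
          else 0))
      (fun p _ => rep_pairF q p)
    have htrip := rep_prod (Finset.univ : Finset (Fin n × Fin n × Fin n)) (fun _ => 4)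
      (fun t v => (-1 : ℂ) ^
        (if t.1 < t.2.1 ∧ t.2.1 < t.2.2 then
          cc t.1 t.2.1 t.2.2 * (if v t.1 then 1 else 0) * (if v t.2.1 then 1 else 0) *
            (if v t.2.2 then 1 else 0)
        else 0))
      (fun t _ => rep_tripF cc t)
    have hind := rep_prod (Finset.univ : Finset (Fin r)) (fun _ => 1)
      (fun jj v => if (L0 jj + ∑ i, Lc jj i * (if v i then 1 else 0)) % 2 = 0 then (1 : ℂ) else 0)
      (fun jj _ => rep_indicator (L0 jj) (Lc jj))
    refine rep_congr (rep_mul (rep_mul (rep_mul hlin hpair) htrip) hind) fun v => ?_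
    congr 1
    congr 1
    congr 1
    · -- linear factor
      rw [← Complex.exp_int_mul]
      congr 1
      push_cast [apply_ite (Int.cast : ℤ → ℂ)]
      rw [add_mul, Finset.sum_mul]
      congr 1
      · ring
      · exact Finset.sum_congr rfl fun i _ => by ring
    · -- pair factor
      rw [zpow_sum' _ Complex.I_ne_zero]
      rw [Finset.prod_congr rfl fun i _ => zpow_sum' _ Complex.I_ne_zero _ _]
      exact Fintype.prod_prod_type' (fun (i j : Fin n) => Complex.I ^
        (if i < j then q i j * (if v i then 1 else 0) * (if v j then 1 else 0)
          else 0))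
    · -- triple factor
      rw [zpow_sum' _ (neg_ne_zero.mpr one_ne_zero)]
      rw [Finset.prod_congr rfl fun i _ => zpow_sum' _ (neg_ne_zero.mpr one_ne_zero) _ _]
      rw [Finset.prod_congr rfl fun i _ => Finset.prod_congr rfl fun j _ =>
        zpow_sum' _ (neg_ne_zero.mpr one_ne_zero) _ _]
      refine Eq.trans (Fintype.prod_prod_type' (fun (i : Fin n) (tt : Fin n × Fin n) =>
        (-1 : ℂ) ^ (if i < tt.1 ∧ tt.1 < tt.2 then
          cc i tt.1 tt.2 * (if v i then 1 else 0) * (if v tt.1 then 1 else 0) *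
            (if v tt.2 then 1 else 0) else 0))) ?_
      refine Finset.prod_congr rfl fun i _ => ?_
      exact Fintype.prod_prod_type' (fun (j k : Fin n) =>
        (-1 : ℂ) ^ (if i < j ∧ j < k then
          cc i j k * (if v i then 1 else 0) * (if v j then 1 else 0) *
            (if v k then 1 else 0) else 0))
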